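/- There exist nilpotent matrices $A, B \in M_4(\mathbb{Q})$ satisfying $A^3 - 3A^2B + 3AB^2 - B^3 = 0$ such that $AB - BA$ is invertible; concretely, one may take $B = J_4$ (the $4 \times 4$ nilpotent Jordan block) and $A$ the matrix with rows $(0, 4/3, -1/3, -1)$, $(1, 0, 3/4, -3/4)$, $(1, 0, 0, 0)$, $(1, 0, 0, 0)$. In particular $A$ and $B$ are not simultaneously triangularizable over $\overline{\mathbb{Q}}$. -/

import Mathlib

open Matrix

section aux

private def Am : Matrix (Fin 4) (Fin 4) ℚ :=
  !![0, 4/3, -1/3, -1; 1, 0, 3/4, -3/4; 1, 0, 0, 0; 1, 0, 0, 0]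
private def Bm : Matrix (Fin 4) (Fin 4) ℚ :=
  !![0, 1, 0, 0; 0, 0, 1, 0; 0, 0, 0, 1; 0, 0, 0, 0]

private lemma mAA : Am * Am = !![0,0,1,-1; 0,4/3,-1/3,-1; 0,4/3,-1/3,-1; 0,4/3,-1/3,-1] := by
  ext i j; fin_cases i <;> fin_cases j <;> norm_num [Am, Matrix.mul_apply, Fin.sum_univ_four, Matrix.vecHead, Matrix.vecTail, Matrix.cons_val_two, Matrix.cons_val_three]

private lemma mA2A : (!![0,0,1,-1; 0,4/3,-1/3,-1; 0,4/3,-1/3,-1; 0,4/3,-1/3,-1]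
    : Matrix (Fin 4) (Fin 4) ℚ) * Am = !![0,0,0,0; 0,0,1,-1; 0,0,1,-1; 0,0,1,-1] := by
  ext i j; fin_cases i <;> fin_cases j <;> norm_num [Am, Matrix.mul_apply, Fin.sum_univ_four, Matrix.vecHead, Matrix.vecTail, Matrix.cons_val_two, Matrix.cons_val_three]

private lemma mA3A : (!![0,0,0,0; 0,0,1,-1; 0,0,1,-1; 0,0,1,-1]
    : Matrix (Fin 4) (Fin 4) ℚ) * Am = 0 := by
  ext i j; fin_cases i <;> fin_cases j <;> norm_num [Am, Matrix.mul_apply, Fin.sum_univ_four, Matrix.vecHead, Matrix.vecTail, Matrix.cons_val_two, Matrix.cons_val_three]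

private lemma mA2B : (!![0,0,1,-1; 0,4/3,-1/3,-1; 0,4/3,-1/3,-1; 0,4/3,-1/3,-1]
    : Matrix (Fin 4) (Fin 4) ℚ) * Bm = !![0,0,0,1; 0,0,4/3,-1/3; 0,0,4/3,-1/3; 0,0,4/3,-1/3] := by
  ext i j; fin_cases i <;> fin_cases j <;> norm_num [Bm, Matrix.mul_apply, Fin.sum_univ_four, Matrix.vecHead, Matrix.vecTail, Matrix.cons_val_two, Matrix.cons_val_three]

private lemma mBB : Bm * Bm = !![0,0,1,0; 0,0,0,1; 0,0,0,0; 0,0,0,0] := by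
  ext i j; fin_cases i <;> fin_cases j <;> norm_num [Bm, Matrix.mul_apply, Fin.sum_univ_four, Matrix.vecHead, Matrix.vecTail, Matrix.cons_val_two, Matrix.cons_val_three]

private lemma mAB2 : Am * (!![0,0,1,0; 0,0,0,1; 0,0,0,0; 0,0,0,0]
    : Matrix (Fin 4) (Fin 4) ℚ) = !![0,0,0,4/3; 0,0,1,0; 0,0,1,0; 0,0,1,0] := by
  ext i j; fin_cases i <;> fin_cases j <;> norm_num [Am, Matrix.mul_apply, Fin.sum_univ_four, Matrix.vecHead, Matrix.vecTail, Matrix.cons_val_two, Matrix.cons_val_three]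

private lemma mB2B : (!![0,0,1,0; 0,0,0,1; 0,0,0,0; 0,0,0,0]
    : Matrix (Fin 4) (Fin 4) ℚ) * Bm = !![0,0,0,1; 0,0,0,0; 0,0,0,0; 0,0,0,0] := by
  ext i j; fin_cases i <;> fin_cases j <;> norm_num [Bm, Matrix.mul_apply, Fin.sum_univ_four, Matrix.vecHead, Matrix.vecTail, Matrix.cons_val_two, Matrix.cons_val_three]

private lemma mB3B : (!![0,0,0,1; 0,0,0,0; 0,0,0,0; 0,0,0,0]
    : Matrix (Fin 4) (Fin 4) ℚ) * Bm = 0 := by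
  ext i j; fin_cases i <;> fin_cases j <;> norm_num [Bm, Matrix.mul_apply, Fin.sum_univ_four, Matrix.vecHead, Matrix.vecTail, Matrix.cons_val_two, Matrix.cons_val_three]

private lemma mAB : Am * Bm = !![0,0,4/3,-1/3; 0,1,0,3/4; 0,1,0,0; 0,1,0,0] := by
  ext i j; fin_cases i <;> fin_cases j <;>
    norm_num [Am, Bm, Matrix.mul_apply, Fin.sum_univ_four, Matrix.vecHead, Matrix.vecTail, Matrix.cons_val_two, Matrix.cons_val_three]

private lemma mBA : Bm * Am = !![1,0,3/4,-3/4; 1,0,0,0; 1,0,0,0; 0,0,0,0] := by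
  ext i j; fin_cases i <;> fin_cases j <;>
    norm_num [Am, Bm, Matrix.mul_apply, Fin.sum_univ_four, Matrix.vecHead, Matrix.vecTail, Matrix.cons_val_two, Matrix.cons_val_three]

private lemma commAB : Am * Bm - Bm * Am =
    !![-1,0,7/12,5/12; -1,1,0,3/4; -1,1,0,0; 0,1,0,0] := by
  rw [mAB, mBA]
  ext i j; fin_cases i <;> fin_cases j <;>
    norm_num [Matrix.sub_apply, Matrix.vecHead, Matrix.vecTail]

private lemma commUnit : IsUnit (Am * Bm - Bm * Am) := by
  rw [commAB]
  refine ⟨⟨_, !![0,0,-1,1; 0,0,0,1; 12/7,-20/21,-16/21,12/7; 0,4/3,-4/3,0], ?_, ?_⟩, rfl⟩ <;>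
    · ext i j
      fin_cases i <;> fin_cases j <;>
        norm_num [Matrix.mul_apply, Matrix.one_apply, Fin.sum_univ_four, Matrix.vecHead, Matrix.vecTail, Fin.ext_iff, Matrix.cons_val_two, Matrix.cons_val_three]

private lemma nilA : Am ^ 4 = 0 := by
  have h : Am ^ 4 = Am * Am * Am * Am := by
    rw [show Am ^ 4 = Am ^ 2 * Am ^ 2 by rw [← pow_add], pow_two]
    noncomm_ring
  rw [h, mAA, mA2A, mA3A]

private lemma nilB : Bm ^ 4 = 0 := by
  have h : Bm ^ 4 = Bm * Bm * Bm * Bm := by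
    rw [show Bm ^ 4 = Bm ^ 2 * Bm ^ 2 by rw [← pow_add], pow_two]
    noncomm_ring
  rw [h, mBB, mB2B, mB3B]

private lemma cubic : Am ^ 3 - 3 * (Am ^ 2 * Bm) + 3 * (Am * Bm ^ 2) - Bm ^ 3 = 0 := by
  have three : ∀ M : Matrix (Fin 4) (Fin 4) ℚ, 3 * M = M + M + M := fun M => by
    rw [show (3 : Matrix (Fin 4) (Fin 4) ℚ) = 1 + 1 + 1 by norm_num, add_mul, add_mul, one_mul]
  have hA3 : Am ^ 3 = !![0,0,0,0; 0,0,1,-1; 0,0,1,-1; 0,0,1,-1] := by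
    rw [pow_succ, pow_two, mAA, mA2A]
  have hB3 : Bm ^ 3 = !![0,0,0,1; 0,0,0,0; 0,0,0,0; 0,0,0,0] := by
    rw [pow_succ, pow_two, mBB, mB2B]
  rw [hA3, hB3, pow_two, pow_two, mAA, mA2B, mBB, mAB2, three, three]
  ext i j
  fin_cases i <;> fin_cases j <;>
    norm_num [Matrix.add_apply, Matrix.sub_apply]

private lemma diag_mul_tri {R : Type*} [CommRing R] {M N : Matrix (Fin 4) (Fin 4) R}
    (hM : M.BlockTriangular id) (hN : N.BlockTriangular id) (i : Fin 4) :
    (M * N) i i = M i i * N i i := by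
  rw [Matrix.mul_apply]
  refine Finset.sum_eq_single i (fun k _ hk => ?_) (by simp)
  rcases lt_or_gt_of_ne hk with h | h
  · rw [hM (show (id k : Fin 4) < id i from h), zero_mul]
  · rw [hN (show (id i : Fin 4) < id k from h), mul_zero]

end aux

/-- There exist nilpotent `A, B ∈ M₄(ℚ)` with
`A³ - 3A²B + 3AB² - B³ = 0` and `AB - BA` invertible; one may take `B = J₄` and the
explicit matrix `A` below. In particular `A` and `B` are not simultaneously
triangularizable over the algebraic closure of `ℚ`. -/
theorem stmt5 :
    ∃ A B : Matrix (Fin 4) (Fin 4) ℚ,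
      A = !![0, 4/3, -1/3, -1; 1, 0, 3/4, -3/4; 1, 0, 0, 0; 1, 0, 0, 0] ∧
      B = !![0, 1, 0, 0; 0, 0, 1, 0; 0, 0, 0, 1; 0, 0, 0, 0] ∧
      IsNilpotent A ∧ IsNilpotent B ∧
      A ^ 3 - 3 * (A ^ 2 * B) + 3 * (A * B ^ 2) - B ^ 3 = 0 ∧
      IsUnit (A * B - B * A) ∧
      ¬ ∃ P : GL (Fin 4) (AlgebraicClosure ℚ),
        (((P⁻¹ : GL (Fin 4) (AlgebraicClosure ℚ)) : Matrix (Fin 4) (Fin 4) (AlgebraicClosure ℚ)) *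
            A.map (algebraMap ℚ (AlgebraicClosure ℚ)) *
            (P : Matrix (Fin 4) (Fin 4) (AlgebraicClosure ℚ))).BlockTriangular id ∧
        (((P⁻¹ : GL (Fin 4) (AlgebraicClosure ℚ)) : Matrix (Fin 4) (Fin 4) (AlgebraicClosure ℚ)) *
            B.map (algebraMap ℚ (AlgebraicClosure ℚ)) *
            (P : Matrix (Fin 4) (Fin 4) (AlgebraicClosure ℚ))).BlockTriangular id := by
  refine ⟨Am, Bm, rfl, rfl, ⟨4, nilA⟩, ⟨4, nilB⟩, cubic, commUnit, ?_⟩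
  rintro ⟨P, hPA, hPB⟩
  set f := algebraMap ℚ (AlgebraicClosure ℚ) with hf
  set Pi : Matrix (Fin 4) (Fin 4) (AlgebraicClosure ℚ) :=
    ((P⁻¹ : GL (Fin 4) (AlgebraicClosure ℚ)) : Matrix (Fin 4) (Fin 4) (AlgebraicClosure ℚ))
      with hPi
  set Pm : Matrix (Fin 4) (Fin 4) (AlgebraicClosure ℚ) :=
    ((P : GL (Fin 4) (AlgebraicClosure ℚ)) : Matrix (Fin 4) (Fin 4) (AlgebraicClosure ℚ))
      with hPm
  have hPPi : Pm * Pi = 1 := by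
    show (P : Matrix (Fin 4) (Fin 4) (AlgebraicClosure ℚ)) * ((P⁻¹ : GL (Fin 4) (AlgebraicClosure ℚ)) : Matrix (Fin 4) (Fin 4) (AlgebraicClosure ℚ)) = 1
    rw [← Units.val_mul, mul_inv_cancel, Units.val_one]
  set A' := Pi * Am.map f * Pm with hA'
  set B' := Pi * Bm.map f * Pm with hB'
  have hcomm : A' * B' - B' * A' = Pi * ((Am * Bm - Bm * Am).map f) * Pm := by
    rw [hA', hB']
    simp only [← RingHom.mapMatrix_apply, map_sub, _root_.map_mul]
    simp only [Matrix.mul_sub, Matrix.sub_mul, Matrix.mul_assoc]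
    rw [← Matrix.mul_assoc Pm Pi (f.mapMatrix Bm * Pm),
      ← Matrix.mul_assoc Pm Pi (f.mapMatrix Am * Pm), hPPi, one_mul, one_mul]
  -- commutator is a unit, so its determinant is a unit
  have hUnit : IsUnit (A' * B' - B' * A') := by
    rw [hcomm]
    exact ((P⁻¹).isUnit).mul (commUnit.map f.mapMatrix) |>.mul P.isUnit
  have hdetUnit : IsUnit (A' * B' - B' * A').det :=
    (Matrix.isUnit_iff_isUnit_det _).mp hUnit
  -- but it is upper triangular with zero diagonal, so det = 0
  have htri : (A' * B' - B' * A').BlockTriangular id := by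
    intro i j hij
    simp only [Matrix.sub_apply]
    rw [Matrix.mul_apply, Matrix.mul_apply]
    have z : ∀ M N : Matrix (Fin 4) (Fin 4) (AlgebraicClosure ℚ),
        M.BlockTriangular id → N.BlockTriangular id →
        ∑ k, M i k * N k j = 0 := by
      intro M N hM hN
      refine Finset.sum_eq_zero fun k _ => ?_
      rcases lt_or_ge (id k) (id i) with h | h
      · rw [hM h, zero_mul]
      · rw [hN (lt_of_lt_of_le hij h), mul_zero]
    rw [z _ _ hPA hPB, z _ _ hPB hPA, sub_zero]
  have hzero : (A' * B' - B' * A').det = 0 := by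
    rw [Matrix.det_of_upperTriangular htri]
    refine Finset.prod_eq_zero (Finset.mem_univ 0) ?_
    simp only [Matrix.sub_apply]
    rw [diag_mul_tri hPA hPB, diag_mul_tri hPB hPA, mul_comm, sub_self]
  rw [hzero] at hdetUnit
  exact not_isUnit_zero hdetUnit
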